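/- Two terminating impartial games G and H satisfy Γ₁(G) = Γ₁(H) if and only if for all ordinals λ and ρ, the games *λ + (G : *ρ) and *λ + (H : *ρ) have the same outcome; more precisely, Γ₀(*λ + (G : *ρ)) = λ ⊕ ex_ρ(Γ₁(G)), so the outcomes of these games over all λ, ρ determine Γ₁(G). -/

import Mathlib

/-! Combinatorial game theory (`SetTheory.PGame`, `Nimber`, `grundyValue`, `nim`,
`Impartial`) has been removed from Mathlib; the notions below restate the
December 2024 Mathlib definitions with their old meaning. -/

universe u

/-- Pre-games (as in Mathlib, December 2024). -/
inductive SetTheory.PGame : Type (u + 1)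
  | mk : ∀ α β : Type u, (α → SetTheory.PGame) → (β → SetTheory.PGame) → SetTheory.PGame

namespace SetTheory

namespace PGame

/-- The indexing type for allowable moves by Left. -/
def LeftMoves : PGame.{u} → Type u
  | mk l _ _ _ => l

/-- The indexing type for allowable moves by Right. -/
def RightMoves : PGame.{u} → Type u
  | mk _ r _ _ => r

/-- The new game after Left makes an allowed move. -/
def moveLeft : ∀ g : PGame.{u}, LeftMoves g → PGame.{u}
  | mk _l _ L _ => L

/-- The new game after Right makes an allowed move. -/
def moveRight : ∀ g : PGame.{u}, RightMoves g → PGame.{u}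
  | mk _ _r _ R => R

/-- Auxiliary pair `(x ≤ y, y ≤ x)`, defined by simultaneous recursion:
`x ≤ y ↔ (∀ i, ¬ y ≤ x.moveLeft i) ∧ ∀ j, ¬ y.moveRight j ≤ x`. -/
noncomputable def leAux : PGame.{u} → PGame.{u} → Prop × Prop :=
  fun x => PGame.rec (motive := fun _ => PGame.{u} → Prop × Prop)
    (fun _xl _xr _xL _xR IHL IHR y =>
      PGame.rec (motive := fun _ => Prop × Prop)
        (fun yl yr yL yR JL JR =>
          ((∀ i, ¬ (IHL i (mk yl yr yL yR)).2) ∧ ∀ j, ¬ (JR j).2,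
            (∀ k, ¬ (JL k).1) ∧ ∀ j, ¬ (IHR j (mk yl yr yL yR)).1)) y) x

noncomputable instance : LE PGame.{u} := ⟨fun x y => (leAux x y).1⟩

noncomputable instance : HasEquiv PGame.{u} := ⟨fun x y => x ≤ y ∧ y ≤ x⟩

/-- The negation of a pre-game. -/
def neg : PGame.{u} → PGame.{u}
  | mk l r L R => mk r l (fun i => neg (R i)) fun i => neg (L i)

instance : Neg PGame.{u} := ⟨neg⟩

/-- The sum of pre-games: moves are `xL + y` and `x + yL`. -/
noncomputable def add : PGame.{u} → PGame.{u} → PGame.{u} :=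
  fun x => PGame.rec (motive := fun _ => PGame.{u} → PGame.{u})
    (fun xl xr _xL _xR IHxl IHxr y =>
      PGame.rec (motive := fun _ => PGame.{u})
        (fun yl yr _yL _yR IHyl IHyr =>
          mk (xl ⊕ yl) (xr ⊕ yr) (Sum.elim (fun i => IHxl i (mk yl yr _yL _yR)) IHyl)
            (Sum.elim (fun i => IHxr i (mk yl yr _yL _yR)) IHyr)) y) x

noncomputable instance : Add PGame.{u} := ⟨add⟩

/-- Auxiliary for impartiality. -/
def ImpartialAux : PGame.{u} → Prop
  | mk l r L R => (mk l r L R ≈ -mk l r L R) ∧ (∀ i, ImpartialAux (L i)) ∧ ∀ j, ImpartialAux (R j)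

/-- An impartial game is equivalent to its negative, and so are all its options. -/
class Impartial (G : PGame.{u}) : Prop where
  out : ImpartialAux G

/-- The nim game `nim o`: both players may move to `nim o'` for any `o' < o`. -/
noncomputable def nim : Ordinal.{u} → PGame.{u}
  | o => mk o.ToType o.ToType (fun x => nim (Ordinal.ToType.toOrd x).1)
      (fun x => nim (Ordinal.ToType.toOrd x).1)
termination_by o => o
decreasing_by
  · exact (Ordinal.ToType.toOrd x).2
  · exact (Ordinal.ToType.toOrd x).2

end PGame

end SetTheory

/-- Nimbers: ordinals with nimber arithmetic (as in Mathlib, December 2024). -/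
def Nimber : Type (u + 1) := Ordinal.{u}

namespace Nimber

noncomputable instance : ConditionallyCompleteLinearOrderBot Nimber.{u} :=
  inferInstanceAs (ConditionallyCompleteLinearOrderBot Ordinal.{u})

instance : WellFoundedRelation Nimber.{u} := inferInstanceAs (WellFoundedRelation Ordinal.{u})

end Nimber

/-- The identity `Ordinal ≃o Nimber`. -/
def Ordinal.toNimber : Ordinal.{u} ≃o Nimber.{u} := OrderIso.refl _

prefix:75 "∗" => Ordinal.toNimber

namespace Nimber

noncomputable instance : Zero Nimber.{u} := ⟨∗(0 : Ordinal.{u})⟩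

/-- Nimber addition: `a + b = mex {a' + b, a + b' | a' < a, b' < b}`. -/
noncomputable def add (a b : Nimber.{u}) : Nimber.{u} :=
  sInf {x | (∃ a' : Set.Iio a, Nimber.add a'.1 b = x) ∨ ∃ b' : Set.Iio b, Nimber.add a b'.1 = x}ᶜ
termination_by (a, b)
decreasing_by
  · exact Prod.Lex.left _ _ a'.2
  · exact Prod.Lex.right _ b'.2

noncomputable instance : Add Nimber.{u} := ⟨Nimber.add⟩

end Nimber

namespace SetTheory.PGame

/-- The Grundy value of a game: the mex of the Grundy values of its left options. -/
noncomputable def grundyValue : PGame.{u} → Nimber.{u}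
  | mk _ _ L _ => sInf (Set.range fun i => grundyValue (L i))ᶜ

end SetTheory.PGame

open SetTheory PGame Nimber

/-- The ordinal sum `G : H` of games: its options are `G : H'` for options `H'` of `H`,
and `G'` for options `G'` of `G` (discarding `H`). -/
def osum (G : PGame) : PGame → PGame
  | PGame.mk l r L R =>
    PGame.mk (G.LeftMoves ⊕ l) (G.RightMoves ⊕ r)
      (Sum.elim G.moveLeft fun j => osum G (L j))
      (Sum.elim G.moveRight fun j => osum G (R j))

/-- The Grundy set `Γ₁(G)`: the set of Grundy numbers of the options of `G`. -/
def grundySet (G : PGame) : Set Nimber :=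
  Set.range fun i => grundyValue (G.moveLeft i)

/-- The ρ-th excluded ordinal of a set `Λ`:
`ex_ρ(Λ) = mex (Λ ∪ { ex_μ(Λ) | μ < ρ })`, where `mex` is the minimal excludant
(least element of the complement). -/
noncomputable def exc (Λ : Set Nimber) : Nimber → Nimber := fun ρ =>
  sInf {a | a ∉ Λ ∧ ∀ μ < ρ, exc Λ μ ≠ a}
termination_by ρ => ρ


noncomputable def Nimber.toOrdinal : Nimber.{u} ≃o Ordinal.{u} := OrderIso.refl _

@[simp] theorem Nimber.toOrdinal_toNimber (a : Nimber.{u}) : ∗(Nimber.toOrdinal a) = a := rfl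

noncomputable instance Nimber.instSuccOrder' : SuccOrder Nimber.{u} :=
  inferInstanceAs (SuccOrder Ordinal.{u})

instance Nimber.instNoMaxOrder' : NoMaxOrder Nimber.{u} := inferInstanceAs (NoMaxOrder Ordinal.{u})

instance Nimber.instWellFoundedLT' : WellFoundedLT Nimber.{u} :=
  inferInstanceAs (WellFoundedLT Ordinal.{u})

instance Nimber.small_Iio' (a : Nimber.{u}) : Small.{u} (Set.Iio a) := Ordinal.small_Iio a

theorem Nimber.compl_nonempty_of_small (s : Set Nimber.{0}) [h : Small.{0} s] : sᶜ.Nonempty := by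
  obtain ⟨a, ha⟩ := @Ordinal.bddAbove_of_small s h
  exact ⟨Order.succ a, fun hs => (Order.lt_succ a).not_ge (ha hs)⟩

theorem mex_eq' {S : Set Nimber.{0}} {v : Nimber.{0}} (h1 : v ∉ S) (h2 : ∀ c < v, c ∈ S) :
    sInf Sᶜ = v :=
  le_antisymm (csInf_le (OrderBot.bddBelow _) h1)
    (le_csInf ⟨v, h1⟩ fun c hc => not_lt.1 fun hlt => hc (h2 c hlt))

theorem mem_of_lt_mex' {S : Set Nimber.{0}} {c : Nimber.{0}} (h : c < sInf Sᶜ) : c ∈ S := by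
  by_contra hc
  exact (csInf_le (OrderBot.bddBelow _) hc).not_gt h

theorem nadd_eq' (a b : Nimber.{0}) : a + b = sInf (Set.range (fun a' : Set.Iio a => a'.1 + b) ∪
    Set.range (fun b' : Set.Iio b => a + b'.1))ᶜ := by
  show Nimber.add a b = _
  rw [Nimber.add]
  rfl

theorem nadd_not_mem' (a b : Nimber.{0}) : a + b ∉ (Set.range (fun a' : Set.Iio a => a'.1 + b) ∪
    Set.range (fun b' : Set.Iio b => a + b'.1)) := by
  rw [nadd_eq' a b]
  exact csInf_mem (Nimber.compl_nonempty_of_small _)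

theorem nadd_ne_left {a a' b : Nimber.{0}} (h : a' < a) : a' + b ≠ a + b :=
  fun he => nadd_not_mem' a b (Or.inl ⟨⟨a', h⟩, he⟩)

theorem nadd_ne_right {a b b' : Nimber.{0}} (h : b' < b) : a + b' ≠ a + b :=
  fun he => nadd_not_mem' a b (Or.inr ⟨⟨b', h⟩, he⟩)

theorem nadd_right_cancel' {a b c : Nimber.{0}} (h : a + c = b + c) : a = b := by
  rcases lt_trichotomy a b with hab | hab | hab
  · exact absurd h (nadd_ne_left hab)
  · exact hab
  · exact absurd h.symm (nadd_ne_left hab)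

theorem nadd_left_cancel' {a b c : Nimber.{0}} (h : a + b = a + c) : b = c := by
  rcases lt_trichotomy b c with hab | hab | hab
  · exact absurd h (nadd_ne_right hab)
  · exact hab
  · exact absurd h.symm (nadd_ne_right hab)

theorem nadd_lt_cases' {a b c : Nimber.{0}} (h : c < a + b) :
    (∃ a' < a, a' + b = c) ∨ ∃ b' < b, a + b' = c := by
  rw [nadd_eq'] at h
  rcases mem_of_lt_mex' h with ⟨⟨a', ha⟩, he⟩ | ⟨⟨b', hb⟩, he⟩
  · exact Or.inl ⟨a', ha, he⟩
  · exact Or.inr ⟨b', hb, he⟩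

theorem Nimber.add_self (a : Nimber.{0}) : a + a = 0 := by
  induction a using WellFoundedLT.induction
  rename_i a IH
  rw [nadd_eq']
  apply mex_eq'
  · rintro (⟨⟨a', ha⟩, he⟩ | ⟨⟨a', ha⟩, he⟩)
    · exact nadd_ne_right ha ((IH a' ha).trans he.symm)
    · exact nadd_ne_left ha ((IH a' ha).trans he.symm)
  · intro c hc
    exact absurd hc (not_lt_of_ge (show (0 : Ordinal.{0}) ≤ c from zero_le))

theorem Nimber.add_eq_zero {a b : Nimber.{0}} : a + b = 0 ↔ a = b :=
  ⟨fun h => (nadd_left_cancel' (h.trans (Nimber.add_self a).symm)).symm,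
    fun h => h ▸ Nimber.add_self a⟩

theorem nim_eq' (o : Ordinal.{u}) : nim o = mk o.ToType o.ToType
    (fun x => nim (Ordinal.ToType.toOrd x).1) (fun x => nim (Ordinal.ToType.toOrd x).1) := by
  rw [nim]

theorem gv_def' (x : PGame.{0}) :
    grundyValue x = sInf (Set.range fun i => grundyValue (x.moveLeft i))ᶜ := by
  cases x
  rfl

theorem gv_ne' (x : PGame.{0}) (i : x.LeftMoves) : grundyValue (x.moveLeft i) ≠ grundyValue x := by
  intro h
  rw [gv_def' x] at h
  have hm : sInf (Set.range fun i => grundyValue (x.moveLeft i))ᶜ ∉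
      Set.range fun i => grundyValue (x.moveLeft i) := csInf_mem (Nimber.compl_nonempty_of_small _)
  exact hm ⟨i, h⟩

theorem gv_lt' (x : PGame.{0}) {c : Nimber.{0}} (h : c < grundyValue x) :
    ∃ i, grundyValue (x.moveLeft i) = c := by
  rw [gv_def' x] at h
  exact mem_of_lt_mex' h

theorem gv_add' (x y : PGame.{0}) : grundyValue (x + y) = grundyValue x + grundyValue y := by
  induction x generalizing y with
  | mk xl xr xL xR ihl ihr =>
  induction y with
  | mk yl yr yL yR jl jr =>
  rw [gv_def' (mk xl xr xL xR + mk yl yr yL yR)]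
  apply mex_eq'
  · rintro ⟨i | j, h⟩
    · exact gv_ne' (mk xl xr xL xR) i (nadd_right_cancel' ((ihl i _).symm.trans h))
    · exact gv_ne' (mk yl yr yL yR) j (nadd_left_cancel' ((jl j).symm.trans h))
  · intro c hc
    rcases nadd_lt_cases' hc with ⟨a', ha, rfl⟩ | ⟨b', hb, rfl⟩
    · obtain ⟨i, rfl⟩ := gv_lt' _ ha
      exact ⟨Sum.inl i, ihl i _⟩
    · obtain ⟨j, rfl⟩ := gv_lt' _ hb
      exact ⟨Sum.inr j, jl j⟩

theorem gv_nim' (o : Ordinal.{0}) : grundyValue (nim o) = ∗o := by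
  induction o using Ordinal.induction with
  | h o IH =>
  rw [nim_eq' o, gv_def']
  apply mex_eq'
  · rintro ⟨i, h⟩
    exact (ne_of_lt (Ordinal.ToType.toOrd i).2)
      (Ordinal.toNimber.injective ((IH _ (Ordinal.ToType.toOrd i).2).symm.trans h))
  · intro c hc
    have hco : Nimber.toOrdinal c < o := hc
    refine ⟨Ordinal.ToType.mk ⟨Nimber.toOrdinal c, hco⟩, ?_⟩
    have e : Ordinal.ToType.toOrd (Ordinal.ToType.mk (⟨Nimber.toOrdinal c, hco⟩ : Set.Iio o)) =
        ⟨Nimber.toOrdinal c, hco⟩ := Ordinal.ToType.mk.symm_apply_apply _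
    change grundyValue (nim (Ordinal.ToType.toOrd
      (Ordinal.ToType.mk (⟨Nimber.toOrdinal c, hco⟩ : Set.Iio o))).1) = c
    rw [e]
    exact IH _ hco

theorem exc_def (Λ : Set Nimber) (ρ : Nimber) :
    exc Λ ρ = sInf {a | a ∉ Λ ∧ ∀ μ < ρ, exc Λ μ ≠ a} := by
  rw [exc]

theorem exc_set_eq (Λ : Set Nimber) (ρ : Nimber) :
    {a | a ∉ Λ ∧ ∀ μ < ρ, exc Λ μ ≠ a} = (Λ ∪ exc Λ '' Set.Iio ρ)ᶜ := by
  ext a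
  simp only [Set.mem_setOf_eq, Set.mem_compl_iff, Set.mem_union, Set.mem_image, Set.mem_Iio,
    not_or, not_exists, not_and]

theorem exc_nonempty (Λ : Set Nimber.{0}) [Small.{0} Λ] (ρ : Nimber.{0}) :
    {a | a ∉ Λ ∧ ∀ μ < ρ, exc.{0,0} Λ μ ≠ a}.Nonempty := by
  rw [exc_set_eq]
  exact Nimber.compl_nonempty_of_small _

theorem exc_mem_set (Λ : Set Nimber.{0}) [Small.{0} Λ] (ρ : Nimber.{0}) :
    exc.{0,0} Λ ρ ∉ Λ ∧ ∀ μ < ρ, exc.{0,0} Λ μ ≠ exc.{0,0} Λ ρ := by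
  have h := csInf_mem (exc_nonempty Λ ρ)
  rw [← exc_def] at h
  exact h

theorem exc_strictMono (Λ : Set Nimber.{0}) [Small.{0} Λ] : StrictMono (exc.{0,0} Λ) := by
  intro μ ρ h
  have h1 : exc.{0,0} Λ μ ≤ exc.{0,0} Λ ρ := by
    rw [exc_def Λ μ, exc_def Λ ρ]
    exact csInf_le_csInf (OrderBot.bddBelow _) (exc_nonempty Λ ρ)
      (fun a ha => ⟨ha.1, fun ν hν => ha.2 ν (hν.trans h)⟩)
  exact h1.lt_of_ne ((exc_mem_set Λ ρ).2 μ h)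

theorem mem_iff_notMem_range_exc (Λ : Set Nimber.{0}) [Small.{0} Λ] (a : Nimber.{0}) :
    a ∈ Λ ↔ a ∉ Set.range (exc.{0,0} Λ) := by
  constructor
  · rintro ha ⟨ρ, rfl⟩
    exact (exc_mem_set Λ ρ).1 ha
  · intro h
    by_contra ha
    have hmem : a ∈ {x | x ∉ Λ ∧ ∀ μ < Order.succ a, exc.{0,0} Λ μ ≠ x} :=
      ⟨ha, fun μ _ hx => h ⟨μ, hx⟩⟩
    have h1 : exc.{0,0} Λ (Order.succ a) ≤ a := by
      rw [exc_def]
      exact csInf_le (OrderBot.bddBelow _) hmem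
    have h2 : Order.succ a ≤ exc.{0,0} Λ (Order.succ a) := (exc_strictMono Λ).le_apply
    exact (Order.lt_succ a).not_ge (h2.trans h1)

theorem eq_of_exc_eq {Λ₁ Λ₂ : Set Nimber.{0}} [Small.{0} Λ₁] [Small.{0} Λ₂]
    (h : exc.{0,0} Λ₁ = exc.{0,0} Λ₂) : Λ₁ = Λ₂ := by
  ext a
  rw [mem_iff_notMem_range_exc Λ₁, mem_iff_notMem_range_exc Λ₂, h]

theorem osum_nim (G : PGame) (o : Ordinal) :
    osum G (nim o) = PGame.mk (G.LeftMoves ⊕ o.ToType) (G.RightMoves ⊕ o.ToType)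
      (Sum.elim G.moveLeft fun j => osum G (nim (Ordinal.ToType.toOrd j).1))
      (Sum.elim G.moveRight fun j => osum G (nim (Ordinal.ToType.toOrd j).1)) := by
  conv_lhs => rw [nim_eq' o, osum]

instance small_grundySet (G : PGame.{0}) : Small.{0} (grundySet G) := by
  unfold grundySet; infer_instance

theorem gv_osum' (G : PGame.{0}) (rho : Ordinal.{0}) :
    grundyValue (osum G (nim rho)) = exc.{0,0} (grundySet G) (∗rho) := by
  induction rho using Ordinal.induction with
  | h rho IH =>
  have hmem := exc_mem_set (grundySet G) (∗rho)
  rw [osum_nim G rho, gv_def']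
  apply mex_eq'
  · rintro ⟨i | j, h⟩
    · exact hmem.1 ⟨i, h⟩
    · have hlt : (Ordinal.ToType.toOrd j).1 < rho := (Ordinal.ToType.toOrd j).2
      exact hmem.2 _ (Ordinal.toNimber.lt_iff_lt.2 hlt) ((IH _ hlt).symm.trans h)
  · intro c hc
    have hbS : c ∈ grundySet G ∨ ∃ μ < ∗rho, exc.{0,0} (grundySet G) μ = c := by
      by_contra hcon
      push_neg at hcon
      have hle : exc.{0,0} (grundySet G) (∗rho) ≤ c := by
        rw [exc_def]
        exact csInf_le (OrderBot.bddBelow _) ⟨hcon.1, hcon.2⟩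
      exact hc.not_ge hle
    rcases hbS with ⟨i, hi⟩ | ⟨μ, hμ, rfl⟩
    · exact ⟨Sum.inl i, hi⟩
    · have hμρ : Nimber.toOrdinal μ < rho := hμ
      refine ⟨Sum.inr (Ordinal.ToType.mk ⟨Nimber.toOrdinal μ, hμρ⟩), ?_⟩
      have e : Ordinal.ToType.toOrd
          (Ordinal.ToType.mk (⟨Nimber.toOrdinal μ, hμρ⟩ : Set.Iio rho)) =
          ⟨Nimber.toOrdinal μ, hμρ⟩ := Ordinal.ToType.mk.symm_apply_apply _
      change grundyValue (osum G (nim (Ordinal.ToType.toOrd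
        (Ordinal.ToType.mk (⟨Nimber.toOrdinal μ, hμρ⟩ : Set.Iio rho))).1)) = _
      rw [e]
      exact IH _ hμρ

theorem key (G : PGame.{0}) [G.Impartial] (lam rho : Ordinal.{0}) :
    grundyValue (nim lam + osum G (nim rho)) = ∗lam + exc.{0,0} (grundySet G) (∗rho) := by
  rw [gv_add', gv_nim', gv_osum']

/-- `Γ₁(G) = Γ₁(H)` iff the games `*λ + (G : *ρ)` and `*λ + (H : *ρ)` have the
same outcome for all ordinals `λ, ρ`; more precisely
`Γ₀(*λ + (G : *ρ)) = λ ⊕ ex_ρ(Γ₁(G))` (so these outcomes determine `Γ₁(G)`). -/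
theorem grundySet_eq_iff_nim_osum_outcomes (G H : PGame.{0}) [G.Impartial] [H.Impartial] :
    (grundySet G = grundySet H ↔
      ∀ lam rho : Ordinal.{0},
        (grundyValue (nim lam + osum G (nim rho)) = 0 ↔
          grundyValue (nim lam + osum H (nim rho)) = 0)) ∧
    ∀ lam rho : Ordinal.{0},
      grundyValue (nim lam + osum G (nim rho)) = ∗lam + exc (grundySet G) (∗rho) := by
  refine ⟨⟨fun hGH lam rho => ?_, fun hout => ?_⟩, fun lam rho => key G lam rho⟩
  · rw [key G, key H, hGH]
  · have hexc : exc.{0,0} (grundySet G) = exc.{0,0} (grundySet H) := by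
      funext ν
      have h := hout (Nimber.toOrdinal (exc.{0,0} (grundySet G) (∗(Nimber.toOrdinal ν))))
        (Nimber.toOrdinal ν)
      rw [key G, key H] at h
      simp only [Nimber.toOrdinal_toNimber] at h
      exact Nimber.add_eq_zero.1 (h.1 (Nimber.add_self _))
    exact eq_of_exc_eq hexc
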